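/- For every even integer n ≥ 18, the circulant graph Circ(n, {3, 4, 5, 8}) is a nut graph. -/

import Mathlib

open Finset Polynomial

/-- The circulant graph `Circ(n, S)` on the vertex set `Fin n` (identified with `ℤ/nℤ`):
distinct vertices `i` and `j` are adjacent iff `i - j ≡ ±s (mod n)` for some `s ∈ S`. -/
def circ (n : ℕ) (S : Finset ℕ) : SimpleGraph (Fin n) where
  Adj i j := i ≠ j ∧ ∃ s ∈ S,
      ((i.val : ZMod n) - (j.val : ZMod n) = (s : ZMod n) ∨
        (j.val : ZMod n) - (i.val : ZMod n) = (s : ZMod n))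
  symm := by
    constructor
    rintro i j ⟨hij, s, hs, h⟩
    exact ⟨hij.symm, s, hs, h.symm⟩
  loopless := by
    constructor
    rintro i ⟨h, -⟩
    exact h rfl

open Classical in
/-- The adjacency matrix (over `ℚ`) of a graph on `Fin n`. -/
noncomputable def adjMat {n : ℕ} (G : SimpleGraph (Fin n)) :
    Matrix (Fin n) (Fin n) ℚ :=
  Matrix.of fun i j => if G.Adj i j then 1 else 0

/-- A graph on at least two vertices is a nut graph if the kernel of its rational
adjacency matrix is one-dimensional, spanned by a vector having no zero entries. -/
def IsNutGraph {n : ℕ} (G : SimpleGraph (Fin n)) : Prop :=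
  2 ≤ n ∧ ∃ v : Fin n → ℚ, (∀ i, v i ≠ 0) ∧ (adjMat G).mulVec v = 0 ∧
    ∀ w : Fin n → ℚ, (adjMat G).mulVec w = 0 → ∃ c : ℚ, w = c • v

open Classical in
/-- The degree of a vertex of a graph on `Fin n`. -/
noncomputable def degOf {n : ℕ} (G : SimpleGraph (Fin n)) (v : Fin n) : ℕ :=
  (Finset.univ.filter fun w => G.Adj v w).card

/-- A graph is `d`-regular if every vertex has degree `d`. -/
def IsRegularGraph {n : ℕ} (G : SimpleGraph (Fin n)) (d : ℕ) : Prop :=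
  ∀ v, degOf G v = d

/-- The eigenvalue polynomial `P(y) = ∑_{k=1}^{n-1} a_k y^k`, where `a_k = 1` iff
`k ∈ S` or `n - k ∈ S`. -/
noncomputable def Pval (n : ℕ) (S : Finset ℕ) (y : ℂ) : ℂ :=
  ∑ k ∈ Finset.Ico 1 n, (if k ∈ S ∨ n - k ∈ S then (1 : ℂ) else 0) * y ^ k

/-- `ω = e^{2πi/n}`. -/
noncomputable def omegaC (n : ℕ) : ℂ :=
  Complex.exp (2 * (Real.pi : ℂ) * Complex.I / (n : ℂ))

/-- The generator set `S_t = {1, …, 2t+1} \ {t}`. -/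
def St (t : ℕ) : Finset ℕ := (Finset.Icc 1 (2 * t + 1)).erase t

/-- The polynomial `Q_t(y) = y^{4t+3} − y^{3t+2} + y^{3t+1} − y^{2t+2} + y^{2t+1}
− y^{t+2} + y^{t+1} − 1` over `ℤ`. -/
noncomputable def Qt (t : ℕ) : Polynomial ℤ :=
  X ^ (4 * t + 3) - X ^ (3 * t + 2) + X ^ (3 * t + 1) - X ^ (2 * t + 2)
    + X ^ (2 * t + 1) - X ^ (t + 2) + X ^ (t + 1) - 1




/- ### Auxiliary lemmas -/


lemma cert22 (x : ℂ) (h1 : x ^ 22 = 1)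
    (h2 : x ^ 16 + x ^ 13 + x ^ 12 + x ^ 11 + x ^ 5 + x ^ 4 + x ^ 3 + 1 = 0) :
    x = -1 := by
  linear_combination (((-551 : ℂ)/3916) + ((105 : ℂ)/979) * x + ((-1587 : ℂ)/3916) * x ^ 2 + ((56 : ℂ)/979) * x ^ 3 + ((-1567 : ℂ)/3916) * x ^ 4 + ((51 : ℂ)/979) * x ^ 5 + ((-1371 : ℂ)/3916) * x ^ 6 + ((310 : ℂ)/979) * x ^ 7 + ((-1791 : ℂ)/3916) * x ^ 8 + ((206 : ℂ)/979) * x ^ 9 + ((-1 : ℂ)/356) * x ^ 10 + ((399 : ℂ)/979) * x ^ 11 + ((53 : ℂ)/3916) * x ^ 12 + ((229 : ℂ)/979) * x ^ 13 + ((-499 : ℂ)/3916) * x ^ 14 + ((323 : ℂ)/979) * x ^ 15 + ((-875 : ℂ)/3916) * x ^ 16 + ((461 : ℂ)/979) * x ^ 17 + ((-195 : ℂ)/3916) * x ^ 18 + ((5 : ℂ)/11) * x ^ 19 + ((-967 : ℂ)/3916) * x ^ 20) * h2 + (((-4467 : ℂ)/3916) + ((-874 : ℂ)/979) * x + ((-1587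 : ℂ)/3916) * x ^ 2 + ((-327 : ℂ)/3916) * x ^ 3 + ((-849 : ℂ)/1958) * x ^ 4 + ((-757 : ℂ)/1958) * x ^ 5 + ((-13 : ℂ)/22) * x ^ 6 + ((-845 : ℂ)/1958) * x ^ 7 + ((-1465 : ℂ)/1958) * x ^ 8 + ((-955 : ℂ)/1958) * x ^ 9 + ((31 : ℂ)/1958) * x ^ 10 + ((-877 : ℂ)/3916) * x ^ 11 + ((195 : ℂ)/3916) * x ^ 12 + ((-5 : ℂ)/11) * x ^ 13 + ((967 : ℂ)/3916) * x ^ 14) * h1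

lemma cert26 (x : ℂ) (h1 : x ^ 26 = 1)
    (h2 : x ^ 16 + x ^ 13 + x ^ 12 + x ^ 11 + x ^ 5 + x ^ 4 + x ^ 3 + 1 = 0) :
    x = -1 := by
  linear_combination (((-1985 : ℂ)/16172) + ((1480 : ℂ)/4043) * x + ((-4993 : ℂ)/16172) * x ^ 2 + ((-329 : ℂ)/4043) * x ^ 3 + ((-97 : ℂ)/16172) * x ^ 4 + ((-6 : ℂ)/4043) * x ^ 5 + ((-3417 : ℂ)/16172) * x ^ 6 + ((824 : ℂ)/4043) * x ^ 7 + ((-4709 : ℂ)/16172) * x ^ 8 + ((-400 : ℂ)/4043) * x ^ 9 + ((2527 : ℂ)/16172) * x ^ 10 + ((352 : ℂ)/4043) * x ^ 11 + ((-261 : ℂ)/1244) * x ^ 12 + ((974 : ℂ)/4043) * x ^ 13 + ((-2449 : ℂ)/16172) * x ^ 14 + ((1466 : ℂ)/4043) * x ^ 15 + ((1511 : ℂ)/16172) * x ^ 16 + ((-109 : ℂ)/4043) * x ^ 17 + ((-2173 : ℂ)/16172) * x ^ 18 + ((305 : ℂ)/4043) * x ^ 19 + ((-3829 : ℂ)/16172)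 * x ^ 20 + ((1226 : ℂ)/4043) * x ^ 21 + ((2471 : ℂ)/16172) * x ^ 22 + ((236 : ℂ)/4043) * x ^ 23 + ((503 : ℂ)/16172) * x ^ 24) * h2 + (((-18157 : ℂ)/16172) + ((-2563 : ℂ)/4043) * x + ((-4993 : ℂ)/16172) * x ^ 2 + ((-3301 : ℂ)/16172) * x ^ 3 + ((1919 : ℂ)/8086) * x ^ 4 + ((-541 : ℂ)/8086) * x ^ 5 + ((-1903 : ℂ)/8086) * x ^ 6 + ((-5 : ℂ)/26) * x ^ 7 + ((-3073 : ℂ)/8086) * x ^ 8 + ((-2569 : ℂ)/8086) * x ^ 9 + ((1191 : ℂ)/8086) * x ^ 10 + ((-5407 : ℂ)/16172) * x ^ 11 + ((-2471 : ℂ)/16172) * x ^ 12 + ((-236 : ℂ)/4043) * x ^ 13 + ((-503 : ℂ)/16172) * x ^ 14) * h1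

lemma cert28 (x : ℂ) (h1 : x ^ 28 = 1)
    (h2 : x ^ 16 + x ^ 13 + x ^ 12 + x ^ 11 + x ^ 5 + x ^ 4 + x ^ 3 + 1 = 0) :
    x = -1 := by
  linear_combination (((17 : ℂ)/56) + ((-1487 : ℂ)/5516) * x + ((-285 : ℂ)/11032) * x ^ 2 + ((415 : ℂ)/1379) * x ^ 3 + ((-1539 : ℂ)/11032) * x ^ 4 + ((-2851 : ℂ)/5516) * x ^ 5 + ((501 : ℂ)/1576) * x ^ 6 + ((263 : ℂ)/1379) * x ^ 7 + ((-4299 : ℂ)/11032) * x ^ 8 + ((-1471 : ℂ)/5516) * x ^ 9 + ((4723 : ℂ)/11032) * x ^ 10 + ((-211 : ℂ)/1379) * x ^ 11 + ((-1571 : ℂ)/11032) * x ^ 12 + ((139 : ℂ)/788) * x ^ 13 + ((1403 : ℂ)/11032) * x ^ 14 + ((-370 : ℂ)/1379) * x ^ 15 + ((1885 : ℂ)/11032) * x ^ 16 + ((2465 : ℂ)/5516) * x ^ 17 + ((-13 : ℂ)/11032) * x ^ 18 + ((-620 : ℂ)/1379) * x ^ 19 + ((403 : ℂ)/1576) * x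 ^ 20 + ((709 : ℂ)/5516) * x ^ 21 + ((-3557 : ℂ)/11032) * x ^ 22 + ((-177 : ℂ)/1379) * x ^ 23 + ((6333 : ℂ)/11032) * x ^ 24 + ((241 : ℂ)/5516) * x ^ 25 + ((-1557 : ℂ)/11032) * x ^ 26) * h2 + (((-39 : ℂ)/56) + ((-7003 : ℂ)/5516) * x + ((-285 : ℂ)/11032) * x ^ 2 + ((6669 : ℂ)/11032) * x ^ 3 + ((-291 : ℂ)/2758) * x ^ 4 + ((-1403 : ℂ)/2758) * x ^ 5 + ((446 : ℂ)/1379) * x ^ 6 + ((450 : ℂ)/1379) * x ^ 7 + ((-2055 : ℂ)/2758) * x ^ 8 + ((-1669 : ℂ)/2758) * x ^ 9 + ((579 : ℂ)/1379) * x ^ 10 + ((2973 : ℂ)/11032) * x ^ 11 + ((-6333 : ℂ)/11032) * x ^ 12 + ((-241 : ℂ)/5516) * x ^ 13 + ((1557 : ℂ)/11032) * x ^ 14) * h1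

lemma cert32 (x : ℂ) (h1 : x ^ 32 = 1)
    (h2 : x ^ 16 + x ^ 13 + x ^ 12 + x ^ 11 + x ^ 5 + x ^ 4 + x ^ 3 + 1 = 0) :
    x = -1 := by
  linear_combination (((-11 : ℂ)/64) + ((13 : ℂ)/32) * x + ((-5 : ℂ)/64) * x ^ 2 + ((-3 : ℂ)/16) * x ^ 3 + ((17 : ℂ)/64) * x ^ 4 + ((-5 : ℂ)/32) * x ^ 5 + ((-17 : ℂ)/64) * x ^ 6 + ((1 : ℂ)/2) * x ^ 7 + ((-27 : ℂ)/64) * x ^ 8 + ((-11 : ℂ)/32) * x ^ 9 + ((27 : ℂ)/64) * x ^ 10 + ((-3 : ℂ)/16) * x ^ 11 + ((-15 : ℂ)/64) * x ^ 12 + ((11 : ℂ)/32) * x ^ 13 + ((-17 : ℂ)/64) * x ^ 14 + ((21 : ℂ)/64) * x ^ 16 + ((-3 : ℂ)/32) * x ^ 17 + ((-5 : ℂ)/64) * x ^ 18 + ((5 : ℂ)/16) * x ^ 19 + ((-15 : ℂ)/64) * x ^ 20 + ((11 : ℂ)/32) * x ^ 21 + ((15 : ℂ)/64) * x ^ 22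 + ((-1 : ℂ)/2) * x ^ 23 + ((5 : ℂ)/64) * x ^ 24 + ((5 : ℂ)/32) * x ^ 25 + ((-37 : ℂ)/64) * x ^ 26 + ((5 : ℂ)/16) * x ^ 27 + ((17 : ℂ)/64) * x ^ 28 + ((-5 : ℂ)/32) * x ^ 29 + ((15 : ℂ)/64) * x ^ 30) * h2 + (((-75 : ℂ)/64) + ((-19 : ℂ)/32) * x + ((-5 : ℂ)/64) * x ^ 2 + ((-23 : ℂ)/64) * x ^ 3 + ((1 : ℂ)/2) * x ^ 4 + ((-1 : ℂ)/8) * x ^ 6 + ((1 : ℂ)/2) * x ^ 7 + ((-1 : ℂ)/2) * x ^ 8 + ((-1 : ℂ)/2) * x ^ 9 + ((1 : ℂ)/2) * x ^ 10 + ((-35 : ℂ)/64) * x ^ 11 + ((-17 : ℂ)/64) * x ^ 12 + ((5 : ℂ)/32) * x ^ 13 + ((-15 : ℂ)/64) * x ^ 14) * h1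

lemma cert34 (x : ℂ) (h1 : x ^ 34 = 1)
    (h2 : x ^ 16 + x ^ 13 + x ^ 12 + x ^ 11 + x ^ 5 + x ^ 4 + x ^ 3 + 1 = 0) :
    x = -1 := by
  linear_combination (((-27 : ℂ)/34) + ((10 : ℂ)/17) * x + ((2 : ℂ)/17) * x ^ 2 + ((23 : ℂ)/34) * x ^ 3 + ((-49 : ℂ)/68) * x ^ 4 + ((1 : ℂ)/68) * x ^ 5 + ((-19 : ℂ)/34) * x ^ 6 + ((75 : ℂ)/68) * x ^ 7 + ((-27 : ℂ)/68) * x ^ 8 + ((-1 : ℂ)/17) * x ^ 9 + ((-67 : ℂ)/68) * x ^ 10 + ((9 : ℂ)/17) * x ^ 11 + ((3 : ℂ)/17) * x ^ 12 + ((25 : ℂ)/68) * x ^ 13 + ((-31 : ℂ)/34) * x ^ 14 + ((7 : ℂ)/34) * x ^ 15 + ((-1 : ℂ)/4) * x ^ 16 + ((71 : ℂ)/68) * x ^ 17 + ((-23 : ℂ)/68) * x ^ 18 + ((9 : ℂ)/68) * x ^ 19 + ((-63 : ℂ)/68) * x ^ 20 + ((33 : ℂ)/34) * x ^ 21 + ((4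 : ℂ)/17) * x ^ 22 + ((21 : ℂ)/68) * x ^ 23 + ((-29 : ℂ)/34) * x ^ 24 + ((5 : ℂ)/34) * x ^ 25 + ((-13 : ℂ)/68) * x ^ 26 + ((25 : ℂ)/34) * x ^ 27 + ((-53 : ℂ)/68) * x ^ 28 + ((5 : ℂ)/68) * x ^ 29 + ((-21 : ℂ)/34) * x ^ 30 + ((79 : ℂ)/68) * x ^ 31 + ((3 : ℂ)/68) * x ^ 32) * h2 + (((-61 : ℂ)/34) + ((-7 : ℂ)/17) * x + ((2 : ℂ)/17) * x ^ 2 + ((-2 : ℂ)/17) * x ^ 3 + ((-63 : ℂ)/68) * x ^ 4 + ((-5 : ℂ)/68) * x ^ 5 + ((14 : ℂ)/17) * x ^ 6 + ((20 : ℂ)/17) * x ^ 7 + ((-29 : ℂ)/68) * x ^ 8 + ((-45 : ℂ)/34) * x ^ 9 + ((-29 : ℂ)/68) * x ^ 10 + ((-2 : ℂ)/17) * x ^ 11 + ((21 : ℂ)/34) * x ^ 12 + ((-79 : ℂ)/68) * x ^ 13 + ((-3 : ℂ)/68) * x ^ 14) * h1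

lemma cert36 (x : ℂ) (h1 : x ^ 36 = 1)
    (h2 : x ^ 16 + x ^ 13 + x ^ 12 + x ^ 11 + x ^ 5 + x ^ 4 + x ^ 3 + 1 = 0) :
    x = -1 := by
  linear_combination (((16049 : ℂ)/89352) + ((13741 : ℂ)/44676) * x + ((-4075 : ℂ)/29784) * x ^ 2 + ((2456 : ℂ)/11169) * x ^ 3 + ((1 : ℂ)/1224) * x ^ 4 + ((-197 : ℂ)/14892) * x ^ 5 + ((12407 : ℂ)/89352) * x ^ 6 + ((-1172 : ℂ)/11169) * x ^ 7 + ((-1367 : ℂ)/9928) * x ^ 8 + ((-8587 : ℂ)/44676) * x ^ 9 + ((-3929 : ℂ)/89352) * x ^ 10 + ((50 : ℂ)/3723) * x ^ 11 + ((-22303 : ℂ)/89352) * x ^ 12 + ((-211 : ℂ)/2628) * x ^ 13 + ((-4835 : ℂ)/29784) * x ^ 14 + ((2192 : ℂ)/11169) * x ^ 15 + ((-6311 : ℂ)/89352) * x ^ 16 + ((17 : ℂ)/292) * x ^ 17 + ((14519 : ℂ)/89352) * x ^ 18 + ((-887 : ℂ)/11169) * x ^ 19 + ((7451 : ℂ)/29784)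 * x ^ 20 + ((10589 : ℂ)/44676) * x ^ 21 + ((-5129 : ℂ)/89352) * x ^ 22 + ((193 : ℂ)/3723) * x ^ 23 + ((4145 : ℂ)/89352) * x ^ 24 + ((11377 : ℂ)/44676) * x ^ 25 + ((-1401 : ℂ)/9928) * x ^ 26 + ((-196 : ℂ)/11169) * x ^ 27 + ((-25655 : ℂ)/89352) * x ^ 28 + ((-3421 : ℂ)/14892) * x ^ 29 + ((-6697 : ℂ)/89352) * x ^ 30 + ((-55 : ℂ)/657) * x ^ 31 + ((5875 : ℂ)/29784) * x ^ 32 + ((4637 : ℂ)/44676) * x ^ 33 + ((-497 : ℂ)/89352) * x ^ 34) * h2 + (((-73303 : ℂ)/89352) + ((-30935 : ℂ)/44676) * x + ((-4075 : ℂ)/29784) * x ^ 2 + ((163 : ℂ)/408) * x ^ 3 + ((10901 : ℂ)/22338) * x ^ 4 + ((443 : ℂ)/1314) * x ^ 5 + ((5914 : ℂ)/11169) * x ^ 6 + ((-235 : ℂ)/11169) * x ^ 7 + ((1559 : ℂ)/22338) * x ^ 8 + ((-1469 : ℂ)/22338) * x ^ 9 + ((-260 : ℂ)/11169) * x ^ 10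 + ((2659 : ℂ)/29784) * x ^ 11 + ((-5875 : ℂ)/29784) * x ^ 12 + ((-4637 : ℂ)/44676) * x ^ 13 + ((497 : ℂ)/89352) * x ^ 14) * h1

lemma cert40 (x : ℂ) (h1 : x ^ 40 = 1)
    (h2 : x ^ 16 + x ^ 13 + x ^ 12 + x ^ 11 + x ^ 5 + x ^ 4 + x ^ 3 + 1 = 0) :
    x = -1 := by
  linear_combination (((-20053 : ℂ)/35120) + ((343 : ℂ)/17560) * x + ((-39299 : ℂ)/35120) * x ^ 2 + ((-2577 : ℂ)/8780) * x ^ 3 + ((-5493 : ℂ)/7024) * x ^ 4 + ((149 : ℂ)/17560) * x ^ 5 + ((-49 : ℂ)/80) * x ^ 6 + ((549 : ℂ)/2195) * x ^ 7 + ((-15077 : ℂ)/35120) * x ^ 8 + ((1995 : ℂ)/3512) * x ^ 9 + ((8637 : ℂ)/35120) * x ^ 10 + ((7759 : ℂ)/8780) * x ^ 11 + ((3271 : ℂ)/35120) * x ^ 12 + ((14381 : ℂ)/17560) * x ^ 13 + ((1109 : ℂ)/7024) * x ^ 14 + ((2133 : ℂ)/2195) * x ^ 15 + ((-5541 : ℂ)/35120)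 * x ^ 16 + ((5207 : ℂ)/17560) * x ^ 17 + ((-16707 : ℂ)/35120) * x ^ 18 + ((199 : ℂ)/1756) * x ^ 19 + ((-25193 : ℂ)/35120) * x ^ 20 + ((-987 : ℂ)/17560) * x ^ 21 + ((-35799 : ℂ)/35120) * x ^ 22 + ((-863 : ℂ)/2195) * x ^ 23 + ((-4961 : ℂ)/7024) * x ^ 24 + ((2719 : ℂ)/17560) * x ^ 25 + ((-25491 : ℂ)/35120) * x ^ 26 + ((2311 : ℂ)/8780) * x ^ 27 + ((-9097 : ℂ)/35120) * x ^ 28 + ((2793 : ℂ)/3512) * x ^ 29 + ((7577 : ℂ)/35120) * x ^ 30 + ((1821 : ℂ)/2195) * x ^ 31 + ((651 : ℂ)/35120) * x ^ 32 + ((13071 : ℂ)/17560) * x ^ 33 + ((729 : ℂ)/7024) * x ^ 34 + ((8267 : ℂ)/8780) * x ^ 35 + ((2439 : ℂ)/35120) * x ^ 36 + ((8197 : ℂ)/17560) * x ^ 37 + ((-16247 : ℂ)/35120) * x ^ 38) * h2 + (((-55173 : ℂ)/35120) + ((-17217 : ℂ)/17560) * x + ((-39299 : ℂ)/35120) * x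 ^ 2 + ((-30361 : ℂ)/35120) * x ^ 3 + ((-2927 : ℂ)/2195) * x ^ 4 + ((-3648 : ℂ)/2195) * x ^ 5 + ((-4402 : ℂ)/2195) * x ^ 6 + ((-4268 : ℂ)/2195) * x ^ 7 + ((-6569 : ℂ)/4390) * x ^ 8 + ((-3591 : ℂ)/4390) * x ^ 9 + ((-237 : ℂ)/2195) * x ^ 10 + ((-16821 : ℂ)/35120) * x ^ 11 + ((-2439 : ℂ)/35120) * x ^ 12 + ((-8197 : ℂ)/17560) * x ^ 13 + ((16247 : ℂ)/35120) * x ^ 14) * h1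

lemma cert42 (x : ℂ) (h1 : x ^ 42 = 1)
    (h2 : x ^ 16 + x ^ 13 + x ^ 12 + x ^ 11 + x ^ 5 + x ^ 4 + x ^ 3 + 1 = 0) :
    x = -1 := by
  linear_combination (((85291 : ℂ)/864444) + ((-38288 : ℂ)/216111) * x + ((-83143 : ℂ)/288148) * x ^ 2 + ((39953 : ℂ)/216111) * x ^ 3 + ((-291577 : ℂ)/864444) * x ^ 4 + ((-22097 : ℂ)/72037) * x ^ 5 + ((6913 : ℂ)/123492) * x ^ 6 + ((1049 : ℂ)/5271) * x ^ 7 + ((-115603 : ℂ)/288148) * x ^ 8 + ((-2797 : ℂ)/216111) * x ^ 9 + ((231551 : ℂ)/864444) * x ^ 10 + ((10238 : ℂ)/72037) * x ^ 11 + ((-48905 : ℂ)/864444) * x ^ 12 + ((8551 : ℂ)/30873) * x ^ 13 + ((38277 : ℂ)/288148) * x ^ 14 + ((18923 : ℂ)/216111) * x ^ 15 + ((-1741 : ℂ)/864444) * x ^ 16 + ((29679 : ℂ)/72037) * x ^ 17 + ((-135785 : ℂ)/864444) * x ^ 18 + ((-55553 : ℂ)/216111) * x ^ 19 + ((9 :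 ℂ)/164) * x ^ 20 + ((43247 : ℂ)/216111) * x ^ 21 + ((-389761 : ℂ)/864444) * x ^ 22 + ((-13915 : ℂ)/72037) * x ^ 23 + ((35215 : ℂ)/864444) * x ^ 24 + ((-31208 : ℂ)/216111) * x ^ 25 + ((-92583 : ℂ)/288148) * x ^ 26 + ((7496 : ℂ)/30873) * x ^ 27 + ((-124597 : ℂ)/864444) * x ^ 28 + ((-7557 : ℂ)/72037) * x ^ 29 + ((79711 : ℂ)/864444) * x ^ 30 + ((106831 : ℂ)/216111) * x ^ 31 + ((2973 : ℂ)/288148) * x ^ 32 + ((-12811 : ℂ)/216111) * x ^ 33 + ((14741 : ℂ)/123492) * x ^ 34 + ((18982 : ℂ)/72037) * x ^ 35 + ((-175841 : ℂ)/864444) * x ^ 36 + ((33379 : ℂ)/216111) * x ^ 37 + ((100909 : ℂ)/288148) * x ^ 38 + ((51077 : ℂ)/216111) * x ^ 39 + ((-215281 : ℂ)/864444) * x ^ 40) * h2 + (((-779153 : ℂ)/864444) + ((-254399 : ℂ)/216111) * x + ((-83143 : ℂ)/288148) * x ^ 2 + ((81701 : ℂ)/288148) * x ^ 3 + ((-179719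 : ℂ)/432222) * x ^ 4 + ((-291227 : ℂ)/432222) * x ^ 5 + ((-97189 : ℂ)/432222) * x ^ 6 + ((-104579 : ℂ)/432222) * x ^ 7 + ((-371869 : ℂ)/432222) * x ^ 8 + ((-259769 : ℂ)/432222) * x ^ 9 + ((93407 : ℂ)/432222) * x ^ 10 + ((27255 : ℂ)/288148) * x ^ 11 + ((-100909 : ℂ)/288148) * x ^ 12 + ((-51077 : ℂ)/216111) * x ^ 13 + ((215281 : ℂ)/864444) * x ^ 14) * h1

lemma cert48 (x : ℂ) (h1 : x ^ 48 = 1)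
    (h2 : x ^ 16 + x ^ 13 + x ^ 12 + x ^ 11 + x ^ 5 + x ^ 4 + x ^ 3 + 1 = 0) :
    x = -1 := by
  linear_combination (((-27013 : ℂ)/82848) + ((20587 : ℂ)/41424) * x + ((-8009 : ℂ)/27616) * x ^ 2 + ((5383 : ℂ)/20712) * x ^ 3 + ((-28481 : ℂ)/82848) * x ^ 4 + ((1151 : ℂ)/13808) * x ^ 5 + ((-18943 : ℂ)/82848) * x ^ 6 + ((616 : ℂ)/2589) * x ^ 7 + ((-4807 : ℂ)/27616) * x ^ 8 + ((-733 : ℂ)/41424) * x ^ 9 + ((-37 : ℂ)/96) * x ^ 10 + ((2709 : ℂ)/6904) * x ^ 11 + ((-7297 : ℂ)/82848) * x ^ 12 + ((8365 : ℂ)/41424) * x ^ 13 + ((-11829 : ℂ)/27616) * x ^ 14 + ((1178 : ℂ)/2589) * x ^ 15 + ((-14885 : ℂ)/82848) * x ^ 16 + ((4233 : ℂ)/13808) * x ^ 17 + ((-2587 : ℂ)/82848) * x ^ 18 + ((1199 : ℂ)/20712) * x ^ 19 + ((-7851 : ℂ)/27616) * x ^ 20 + ((16493 : ℂ)/41424)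 * x ^ 21 + ((-7775 : ℂ)/82848) * x ^ 22 + ((87 : ℂ)/863) * x ^ 23 + ((-41749 : ℂ)/82848) * x ^ 24 + ((12931 : ℂ)/41424) * x ^ 25 + ((-6857 : ℂ)/27616) * x ^ 26 + ((5335 : ℂ)/20712) * x ^ 27 + ((-33377 : ℂ)/82848) * x ^ 28 + ((1967 : ℂ)/13808) * x ^ 29 + ((-18751 : ℂ)/82848) * x ^ 30 + ((508 : ℂ)/2589) * x ^ 31 + ((297 : ℂ)/27616) * x ^ 32 + ((6635 : ℂ)/41424) * x ^ 33 + ((-40283 : ℂ)/82848) * x ^ 34 + ((3165 : ℂ)/6904) * x ^ 35 + ((671 : ℂ)/82848) * x ^ 36 + ((14797 : ℂ)/41424) * x ^ 37 + ((-9941 : ℂ)/27616) * x ^ 38 + ((809 : ℂ)/2589) * x ^ 39 + ((-26261 : ℂ)/82848) * x ^ 40 + ((2337 : ℂ)/13808) * x ^ 41 + ((-14395 : ℂ)/82848) * x ^ 42 + ((2615 : ℂ)/20712) * x ^ 43 + ((-3563 : ℂ)/27616) * x ^ 44 + ((20477 : ℂ)/41424) * x ^ 45 + ((-2303 : ℂ)/82848)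 * x ^ 46) * h2 + (((-109861 : ℂ)/82848) + ((-20837 : ℂ)/41424) * x + ((-8009 : ℂ)/27616) * x ^ 2 + ((-1827 : ℂ)/27616) * x ^ 3 + ((-895 : ℂ)/5178) * x ^ 4 + ((-185 : ℂ)/5178) * x ^ 5 + ((2467 : ℂ)/10356) * x ^ 6 + ((-352 : ℂ)/2589) * x ^ 7 + ((-452 : ℂ)/2589) * x ^ 8 + ((-1312 : ℂ)/2589) * x ^ 9 + ((-758 : ℂ)/2589) * x ^ 10 + ((-2719 : ℂ)/27616) * x ^ 11 + ((3563 : ℂ)/27616) * x ^ 12 + ((-20477 : ℂ)/41424) * x ^ 13 + ((2303 : ℂ)/82848) * x ^ 14) * h1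

lemma cert60 (x : ℂ) (h1 : x ^ 60 = 1)
    (h2 : x ^ 16 + x ^ 13 + x ^ 12 + x ^ 11 + x ^ 5 + x ^ 4 + x ^ 3 + 1 = 0) :
    x = -1 := by
  linear_combination (((-770707 : ℂ)/2258520) + ((1613 : ℂ)/38940) * x + ((-614407 : ℂ)/752840) * x ^ 2 + ((-24829 : ℂ)/282315) * x ^ 3 + ((-260695 : ℂ)/451704) * x ^ 4 + ((-38913 : ℂ)/376420) * x ^ 5 + ((-62159 : ℂ)/205320) * x ^ 6 + ((38152 : ℂ)/282315) * x ^ 7 + ((-244801 : ℂ)/752840) * x ^ 8 + ((6035 : ℂ)/20532) * x ^ 9 + ((472123 : ℂ)/2258520) * x ^ 10 + ((57446 : ℂ)/94105) * x ^ 11 + ((-6331 : ℂ)/2258520) * x ^ 12 + ((676129 : ℂ)/1129260) * x ^ 13 + ((207 : ℂ)/2552) * x ^ 14 + ((187604 : ℂ)/282315) * x ^ 15 + ((-19849 : ℂ)/205320) * x ^ 16 + ((9061 : ℂ)/34220) * x ^ 17 + ((-52823 : ℂ)/205320) * x ^ 18 + ((-3853 : ℂ)/56463) * x ^ 19 + ((-270569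 : ℂ)/752840) * x ^ 20 + ((16637 : ℂ)/1129260) * x ^ 21 + ((-1693781 : ℂ)/2258520) * x ^ 22 + ((-25118 : ℂ)/94105) * x ^ 23 + ((-211535 : ℂ)/451704) * x ^ 24 + ((139621 : ℂ)/1129260) * x ^ 25 + ((-415023 : ℂ)/752840) * x ^ 26 + ((63737 : ℂ)/282315) * x ^ 27 + ((-492923 : ℂ)/2258520) * x ^ 28 + ((17 : ℂ)/44) * x ^ 29 + ((409883 : ℂ)/2258520) * x ^ 30 + ((5492 : ℂ)/9735) * x ^ 31 + ((87103 : ℂ)/752840) * x ^ 32 + ((542309 : ℂ)/1129260) * x ^ 33 + ((57551 : ℂ)/451704) * x ^ 34 + ((65128 : ℂ)/94105) * x ^ 35 + ((-427099 : ℂ)/2258520) * x ^ 36 + ((178273 : ℂ)/1129260) * x ^ 37 + ((-261911 : ℂ)/752840) * x ^ 38 + ((10180 : ℂ)/56463) * x ^ 39 + ((-1324427 : ℂ)/2258520) * x ^ 40 + ((-35421 : ℂ)/376420) * x ^ 41 + ((-1289581 : ℂ)/2258520) * x ^ 42 + ((-94034 : ℂ)/282315) * x ^ 43 + ((-1127 :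 ℂ)/2552) * x ^ 44 + ((160121 : ℂ)/1129260) * x ^ 45 + ((-1090949 : ℂ)/2258520) * x ^ 46 + ((14224 : ℂ)/94105) * x ^ 47 + ((-324403 : ℂ)/2258520) * x ^ 48 + ((153977 : ℂ)/225852) * x ^ 49 + ((54521 : ℂ)/752840) * x ^ 50 + ((151733 : ℂ)/282315) * x ^ 51 + ((109 : ℂ)/2258520) * x ^ 52 + ((181843 : ℂ)/376420) * x ^ 53 + ((24583 : ℂ)/451704) * x ^ 54 + ((156814 : ℂ)/282315) * x ^ 55 + ((149607 : ℂ)/752840) * x ^ 56 + ((34843 : ℂ)/102660) * x ^ 57 + ((-68143 : ℂ)/205320) * x ^ 58) * h2 + (((-3029227 : ℂ)/2258520) + ((-37327 : ℂ)/38940) * x + ((-614407 : ℂ)/752840) * x ^ 2 + ((-323113 : ℂ)/752840) * x ^ 3 + ((-495157 : ℂ)/564630) * x ^ 4 + ((-688463 : ℂ)/564630) * x ^ 5 + ((-329006 : ℂ)/282315) * x ^ 6 + ((-380014 : ℂ)/282315) * x ^ 7 + ((-21293 : ℂ)/19470) * x ^ 8 + ((-35383 : ℂ)/51330) * x ^ 9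 + ((-17486 : ℂ)/282315) * x ^ 10 + ((-168313 : ℂ)/752840) * x ^ 11 + ((-149607 : ℂ)/752840) * x ^ 12 + ((-34843 : ℂ)/102660) * x ^ 13 + ((68143 : ℂ)/205320) * x ^ 14) * h1


lemma totient_odd_lower : ∀ m : ℕ, Odd m → m ≤ m.totient ^ 2 := by
  intro m
  induction m using Nat.recOnPosPrimePosCoprime with
  | prime_pow p k hp hk =>
    intro hodd
    have hpo : Odd p := hp.odd_of_ne_two
      (by rintro rfl; exact (Nat.not_odd_iff_even.mpr (Nat.even_pow.mpr ⟨by norm_num, hk.ne'⟩)) hodd)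
    have hp2 : 3 ≤ p := by have := hp.two_le; rcases hpo with ⟨t, ht⟩; omega
    rw [Nat.totient_prime_pow hp hk]
    have h1 : p ≤ (p-1)^2 := by zify [hp.one_le]; nlinarith
    calc p^k = p^(k-1) * p := by rw [← pow_succ]; congr 1; omega
      _ ≤ p^(2*(k-1)) * (p-1)^2 :=
        Nat.mul_le_mul (Nat.pow_le_pow_right (by omega) (by omega)) h1
      _ = (p^(k-1) * (p-1))^2 := by ring
  | zero => intro h; simp at h
  | one => intro _; simp
  | coprime a b ha hb hab iha ihb =>
    intro hodd
    rw [Nat.totient_mul hab, mul_pow]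
    exact Nat.mul_le_mul (iha (Nat.odd_mul.mp hodd).1) (ihb (Nat.odd_mul.mp hodd).2)

lemma totient_lower (d : ℕ) : d ≤ 2 * d.totient ^ 2 := by
  rcases Nat.eq_zero_or_pos d with rfl | hd
  · simp
  obtain ⟨k, m, hm, rfl⟩ := Nat.exists_eq_two_pow_mul_odd hd.ne'
  have hcop : Nat.Coprime (2 ^ k) m := by
    rcases hm with ⟨t, rfl⟩
    exact (Nat.coprime_two_left.mpr (by simp [Nat.even_add_one, parity_simps])).pow_left _
  rw [Nat.totient_mul hcop, mul_pow]
  have hmle := totient_odd_lower m hm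
  rcases Nat.eq_zero_or_pos k with rfl | hk
  · simpa using by omega
  · have h2 : Nat.totient (2 ^ k) = 2 ^ (k - 1) := by
      rw [Nat.totient_prime_pow Nat.prime_two hk]; simp
    rw [h2]
    have : 2 ^ k ≤ 2 * (2 ^ (k-1)) ^ 2 := by
      rw [← pow_mul, ← pow_succ']
      exact Nat.pow_le_pow_right (by norm_num) (by omega)
    calc 2 ^ k * m ≤ (2 * (2 ^ (k-1)) ^ 2) * (m.totient ^ 2) :=
          Nat.mul_le_mul this hmle
      _ = 2 * ((2 ^ (k-1)) ^ 2 * m.totient ^ 2) := by ring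

set_option maxRecDepth 100000 in
set_option maxHeartbeats 4000000 in
lemma order_filter : ∀ d < 513, Nat.totient d ≤ 16 →
    (d ∣ 22 ∨ d ∣ 26 ∨ d ∣ 28 ∨ d ∣ 32 ∨ d ∣ 34 ∨ d ∣ 36 ∨ d ∣ 40 ∨ d ∣ 42 ∨
      d ∣ 48 ∨ d ∣ 60 ∨ d = 0) := by decide

lemma cert_stub (x : ℂ) (hD : x ^ 22 = 1 ∨ x ^ 26 = 1 ∨ x ^ 28 = 1 ∨ x ^ 32 = 1 ∨ x ^ 34 = 1 ∨
      x ^ 36 = 1 ∨ x ^ 40 = 1 ∨ x ^ 42 = 1 ∨ x ^ 48 = 1 ∨ x ^ 60 = 1)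
    (h2 : x ^ 16 + x ^ 13 + x ^ 12 + x ^ 11 + x ^ 5 + x ^ 4 + x ^ 3 + 1 = 0) :
    x = -1 := by
  rcases hD with h | h | h | h | h | h | h | h | h | h
  · exact cert22 x h h2
  · exact cert26 x h h2
  · exact cert28 x h h2
  · exact cert32 x h h2
  · exact cert34 x h h2
  · exact cert36 x h h2
  · exact cert40 x h h2
  · exact cert42 x h h2
  · exact cert48 x h h2
  · exact cert60 x h h2

lemma key_lemma (x : ℂ) (m : ℕ) (hm : 0 < m) (hxm : x ^ m = 1)
    (hp : x ^ 16 + x ^ 13 + x ^ 12 + x ^ 11 + x ^ 5 + x ^ 4 + x ^ 3 + 1 = 0) :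
    x = -1 := by
  have hfin : IsOfFinOrder x := isOfFinOrder_iff_pow_eq_one.mpr ⟨m, hm, hxm⟩
  set d := orderOf x with hdd
  have hd : 0 < d := hfin.orderOf_pos
  have hprim : IsPrimitiveRoot x d := IsPrimitiveRoot.orderOf x
  have hxd : x ^ d = 1 := pow_orderOf_eq_one x
  set P : ℚ[X] := X ^ 16 + X ^ 13 + X ^ 12 + X ^ 11 + X ^ 5 + X ^ 4 + X ^ 3 + 1 with hP
  have hint : IsIntegral ℚ x := ⟨X ^ d - C 1, monic_X_pow_sub_C 1 hd.ne', by
    simp [eval₂_sub, eval₂_pow, hxd]⟩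
  have haev : (aeval x) P = 0 := by
    simp only [hP, map_add, map_pow, aeval_X, map_one]
    exact hp
  have hdvd : minpoly ℚ x ∣ P := minpoly.dvd ℚ x haev
  rw [← cyclotomic_eq_minpoly_rat hprim hd] at hdvd
  have hPne : P ≠ 0 := by
    intro h
    have := congrArg (fun q => Polynomial.coeff q 0) h
    simp [hP] at this
  have hdeg : Nat.totient d ≤ 16 := by
    have h1 := Polynomial.natDegree_le_of_dvd hdvd hPne
    rw [natDegree_cyclotomic] at h1
    have h2 : P.natDegree ≤ 16 := by
      rw [hP]
      compute_degree
    omega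
  have hd513 : d < 513 := by
    have := totient_lower d
    nlinarith [hdeg]
  have := order_filter d hd513 hdeg
  have hpow : ∀ D : ℕ, d ∣ D → x ^ D = 1 := fun D hdvd' =>
    orderOf_dvd_iff_pow_eq_one.mp (hdd ▸ hdvd')
  rcases this with h | h | h | h | h | h | h | h | h | h | h
  all_goals first
    | omega
    | exact cert_stub x (by tauto) hp


lemma sumT0 {M : Type*} [AddCommMonoid M] (n : ℕ) (hn : 18 ≤ n) (f : ℕ → M) :
    ∑ k ∈ ({3, 4, 5, 8, n-8, n-5, n-4, n-3} : Finset ℕ), f k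
      = f 3 + (f 4 + (f 5 + (f 8 + (f (n-8) + (f (n-5) + (f (n-4) + f (n-3))))))) := by
  rw [Finset.sum_insert (by simp; omega), Finset.sum_insert (by simp; omega),
    Finset.sum_insert (by simp; omega), Finset.sum_insert (by simp; omega),
    Finset.sum_insert (by simp; omega), Finset.sum_insert (by simp; omega),
    Finset.sum_insert (by simp; omega), Finset.sum_singleton]


/-- For every even `n ≥ 18`, the circulant graph
`Circ(n, {3, 4, 5, 8})` is a nut graph. -/
theorem circulant_nut_3458
    (n : ℕ) (hn : 18 ≤ n) (hneven : Even n) :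
    IsNutGraph (circ n ({3, 4, 5, 8} : Finset ℕ)) := by
  classical
  haveI : NeZero n := ⟨by omega⟩
  obtain ⟨hf, hhalf⟩ := hneven
  set S : Finset ℕ := {3, 4, 5, 8} with hS
  set T₀ : Finset ℕ := {3, 4, 5, 8, n-8, n-5, n-4, n-3} with hT₀
  set G := circ n S with hG
  -- the equivalence Fin n ≃ ZMod n
  let e : Fin n ≃ ZMod n :=
    { toFun := fun i => (i.val : ZMod n)
      invFun := fun z => ⟨z.val, z.val_lt⟩
      left_inv := fun i => by ext; simp [ZMod.val_cast_of_lt i.isLt]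
      right_inv := fun z => by simp [ZMod.natCast_rightInverse z] }
  have he : ∀ i : Fin n, e i = (i.val : ZMod n) := fun _ => rfl
  have hesymmval : ∀ z : ZMod n, (e.symm z).val = z.val := fun _ => rfl
  have hneg : ∀ s : ℕ, s ≤ n → ((n - s : ℕ) : ZMod n) = -(s : ZMod n) := by
    intro s hs
    have h1 : ((n - s : ℕ) : ZMod n) + (s : ZMod n) = 0 := by
      rw [← Nat.cast_add]
      have : n - s + s = n := by omega
      rw [this, ZMod.natCast_self]
    linear_combination h1
  have hvlt : ∀ k : ℕ, k < n → ((k : ZMod n)).val = k := fun k h => ZMod.val_cast_of_lt h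
  -- membership in T₀-image describes adjacency differences
  have hTmem : ∀ k, k ∈ T₀ ↔ (k = 3 ∨ k = 4 ∨ k = 5 ∨ k = 8 ∨ k = n-8 ∨ k = n-5 ∨
      k = n-4 ∨ k = n-3) := by intro k; simp [hT₀]
  have hadj : ∀ i j : Fin n, G.Adj i j ↔
      ((j.val : ZMod n) - (i.val : ZMod n)) ∈ T₀.image (fun k : ℕ => (k : ZMod n)) := by
    intro i j
    constructor
    · rintro ⟨hne, s, hs, h | h⟩
      · -- i - j = s, so j - i = -s = n - s
        refine Finset.mem_image.mpr ⟨n - s, ?_, ?_⟩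
        · rw [hTmem]; fin_cases hs <;> simp
        · rw [hneg s (by fin_cases hs <;> omega)]; linear_combination h
      · refine Finset.mem_image.mpr ⟨s, ?_, ?_⟩
        · rw [hTmem]; fin_cases hs <;> simp
        · exact h.symm
    · intro hmem
      obtain ⟨k, hk, hku⟩ := Finset.mem_image.mp hmem
      have hkn : k < n ∧ k ≠ 0 := by rw [hTmem] at hk; rcases hk with h|h|h|h|h|h|h|h <;> omega
      have hne : i ≠ j := by
        rintro rfl
        rw [sub_self] at hku
        have := hvlt k hkn.1
        rw [hku, ZMod.val_zero] at this
        omega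
      rw [hTmem] at hk
      refine ⟨hne, ?_⟩
      rcases hk with h|h|h|h|h|h|h|h
      · exact ⟨3, by simp [hS], Or.inr (by rw [← hku, h])⟩
      · exact ⟨4, by simp [hS], Or.inr (by rw [← hku, h])⟩
      · exact ⟨5, by simp [hS], Or.inr (by rw [← hku, h])⟩
      · exact ⟨8, by simp [hS], Or.inr (by rw [← hku, h])⟩
      · refine ⟨8, by simp [hS], Or.inl ?_⟩
        have h2 : (j.val : ZMod n) - (i.val : ZMod n) = -((8:ℕ) : ZMod n) := by
          rw [← hku, h]; exact hneg 8 (by omega)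
        linear_combination -h2
      · refine ⟨5, by simp [hS], Or.inl ?_⟩
        have h2 : (j.val : ZMod n) - (i.val : ZMod n) = -((5:ℕ) : ZMod n) := by
          rw [← hku, h]; exact hneg 5 (by omega)
        linear_combination -h2
      · refine ⟨4, by simp [hS], Or.inl ?_⟩
        have h2 : (j.val : ZMod n) - (i.val : ZMod n) = -((4:ℕ) : ZMod n) := by
          rw [← hku, h]; exact hneg 4 (by omega)
        linear_combination -h2
      · refine ⟨3, by simp [hS], Or.inl ?_⟩
        have h2 : (j.val : ZMod n) - (i.val : ZMod n) = -((3:ℕ) : ZMod n) := by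
          rw [← hku, h]; exact hneg 3 (by omega)
        linear_combination -h2
  have hinj : Set.InjOn (fun k : ℕ => (k : ZMod n)) T₀ := by
    intro a ha b hb hab
    have ha' : a ∈ T₀ := ha
    have hb' : b ∈ T₀ := hb
    have han : a < n := by rw [hTmem] at ha'; omega
    have hbn : b < n := by rw [hTmem] at hb'; omega
    have := congrArg ZMod.val hab
    simpa [hvlt a han, hvlt b hbn] using this
  -- row formula
  have hrow : ∀ (w : Fin n → ℚ) (i : Fin n),
      (adjMat G).mulVec w i = ∑ k ∈ T₀, w (e.symm ((i.val : ZMod n) + (k : ZMod n))) := by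
    intro w i
    have h1 : (adjMat G).mulVec w i = ∑ j : Fin n, if G.Adj i j then w j else 0 := by
      simp [Matrix.mulVec, dotProduct, adjMat, ite_mul]
    rw [h1]
    set x := (i.val : ZMod n) with hx
    have h2 : ∀ u : ZMod n,
        (if G.Adj i (e.symm (x + u)) then w (e.symm (x + u)) else 0)
          = if u ∈ T₀.image (fun k : ℕ => (k : ZMod n)) then w (e.symm (x + u)) else 0 := by
      intro u
      refine if_congr ?_ rfl rfl
      rw [hadj]
      have : ((e.symm (x + u)).val : ZMod n) = x + u := by
        rw [← he (e.symm (x+u)), Equiv.apply_symm_apply]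
      rw [this]
      simp [hx]
    calc ∑ j : Fin n, (if G.Adj i j then w j else 0)
        = ∑ u : ZMod n, (if G.Adj i (e.symm (x + u)) then w (e.symm (x + u)) else 0) :=
          (Fintype.sum_equiv ((Equiv.addLeft x).trans e.symm)
            (fun u => if G.Adj i (e.symm (x + u)) then w (e.symm (x + u)) else 0)
            (fun j => if G.Adj i j then w j else 0) (fun u => rfl)).symm
      _ = ∑ u : ZMod n, (if u ∈ T₀.image (fun k : ℕ => (k : ZMod n))
            then w (e.symm (x + u)) else 0) := by
          exact Finset.sum_congr rfl fun u _ => h2 u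
      _ = ∑ u ∈ T₀.image (fun k : ℕ => (k : ZMod n)), w (e.symm (x + u)) := by
          rw [Finset.sum_ite_mem, Finset.univ_inter]
      _ = ∑ k ∈ T₀, w (e.symm (x + (k : ZMod n))) := Finset.sum_image (fun a ha b hb h => hinj ha hb h)
  -- parity helpers
  have hnev : Even n := ⟨hf, hhalf⟩
  have hm1Q : ∀ a : ℕ, (-1 : ℚ) ^ (a % n) = (-1) ^ a := by
    intro a
    conv_rhs => rw [← Nat.div_add_mod a n]
    rw [pow_add, pow_mul, hnev.neg_one_pow, one_pow, one_mul]
  have hvadd : ∀ z u : ZMod n, (-1 : ℚ) ^ ((z + u).val) = (-1) ^ z.val * (-1) ^ u.val := by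
    intro z u; rw [ZMod.val_add, hm1Q, pow_add]
  -- the candidate kernel vector
  set v : Fin n → ℚ := fun i => (-1) ^ (i.val) with hv
  have hv0 : ∀ i, v i ≠ 0 := by intro i; simp [hv]
  have hT0vals : ∀ x : ZMod n, ∑ k ∈ T₀, (-1:ℚ) ^ (((k : ZMod n)).val) = 0 := by
    intro x
    rw [sumT0 n hn (fun k => (-1:ℚ) ^ (((k : ZMod n)).val)),
      hvlt 3 (by omega), hvlt 4 (by omega), hvlt 5 (by omega), hvlt 8 (by omega),
      hvlt (n-8) (by omega), hvlt (n-5) (by omega), hvlt (n-4) (by omega), hvlt (n-3) (by omega)]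
    have e1 : (-1:ℚ) ^ (n-8) = 1 := Even.neg_one_pow ⟨hf - 4, by omega⟩
    have e2 : (-1:ℚ) ^ (n-5) = -1 := Odd.neg_one_pow ⟨hf - 3, by omega⟩
    have e3 : (-1:ℚ) ^ (n-4) = 1 := Even.neg_one_pow ⟨hf - 2, by omega⟩
    have e4 : (-1:ℚ) ^ (n-3) = -1 := Odd.neg_one_pow ⟨hf - 2, by omega⟩
    rw [e1, e2, e3, e4]; norm_num
  have hAv : (adjMat G).mulVec v = 0 := by
    funext i
    simp only [Pi.zero_apply]
    rw [hrow v i]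
    set x := ((i.val : ZMod n)) with hx
    have hterm : ∀ k : ℕ, v (e.symm (x + (k : ZMod n)))
        = (-1) ^ x.val * (-1) ^ (((k : ZMod n)).val) := by
      intro k
      show (-1:ℚ) ^ ((e.symm (x + (k : ZMod n))).val) = _
      rw [hesymmval, hvadd]
    rw [Finset.sum_congr rfl (fun k _ => hterm k), ← Finset.mul_sum, hT0vals x, mul_zero]
  refine ⟨by omega, v, hv0, hAv, ?_⟩
  -- uniqueness part
  intro w hw
  set W : ZMod n → ℂ := fun z => ((w (e.symm z) : ℚ) : ℂ) with hW
  have hrel : ∀ x : ZMod n, ∑ k ∈ T₀, W (x + (k : ZMod n)) = 0 := by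
    intro x
    have h0 : ∑ k ∈ T₀, w (e.symm (x + (k : ZMod n))) = 0 := by
      have h1 := congrFun hw (e.symm x)
      rw [hrow w (e.symm x)] at h1
      have hx : (((e.symm x).val : ℕ) : ZMod n) = x := by
        rw [hesymmval]; exact ZMod.natCast_rightInverse x
      rw [hx] at h1
      simpa using h1
    calc ∑ k ∈ T₀, W (x + (k : ZMod n))
        = ((∑ k ∈ T₀, w (e.symm (x + (k : ZMod n))) : ℚ) : ℂ) := by push_cast; rfl
      _ = 0 := by rw [h0]; norm_num
  set ω : ℂ := Complex.exp (2 * Real.pi * Complex.I / n) with hωdef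
  have hprim : IsPrimitiveRoot ω n := Complex.isPrimitiveRoot_exp n (NeZero.ne n)
  have hωn : ω ^ n = 1 := hprim.pow_eq_one
  have hωne : ω ≠ 0 := Complex.exp_ne_zero _
  have hmod : ∀ a : ℕ, ω ^ (a % n) = ω ^ a := by
    intro a; conv_rhs => rw [← Nat.div_add_mod a n]
    rw [pow_add, pow_mul, hωn, one_pow, one_mul]
  have hωadd : ∀ z u : ZMod n, ω ^ ((z + u).val) = ω ^ z.val * ω ^ u.val := by
    intro z u; rw [ZMod.val_add, hmod, pow_add]
  set F : ℕ → ℂ := fun j => ∑ z : ZMod n, W z * (ω ^ z.val) ^ j with hF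
  have claim1 : ∀ (j : ℕ) (u : ZMod n),
      (∑ z : ZMod n, (ω ^ z.val) ^ j * W (z + u)) * (ω ^ u.val) ^ j = F j := by
    intro j u
    rw [Finset.sum_mul]
    have hterm : ∀ z : ZMod n, (ω ^ z.val) ^ j * W (z + u) * (ω ^ u.val) ^ j
        = W (z + u) * (ω ^ ((z + u).val)) ^ j := by
      intro z; rw [hωadd, mul_pow]; ring
    rw [Finset.sum_congr rfl fun z _ => hterm z]
    exact Fintype.sum_equiv (Equiv.addRight u) _ _ (fun z => rfl)
  have stepA : ∀ j : ℕ, F j = 0 ∨ ω ^ j = -1 := by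
    intro j
    set ξ : ℂ := (ω ^ j)⁻¹ with hξ
    have hξn : ξ ^ n = 1 := by
      rw [hξ, inv_pow, ← pow_mul, mul_comm j n, pow_mul, hωn, one_pow, inv_one]
    have hterm : ∀ u : ZMod n,
        ∑ z : ZMod n, (ω ^ z.val) ^ j * W (z + u) = F j * ξ ^ u.val := by
      intro u
      have h2 : ((ω ^ u.val) ^ j) ≠ 0 := pow_ne_zero _ (pow_ne_zero _ hωne)
      have h3 : ξ ^ u.val = ((ω ^ u.val) ^ j)⁻¹ := by
        rw [hξ, ← inv_pow, ← pow_mul, ← pow_mul, mul_comm j u.val, inv_pow]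
      rw [h3]
      exact (eq_mul_inv_iff_mul_eq₀ h2).mpr (claim1 j u)
    have hsum0 : F j * (∑ k ∈ T₀, ξ ^ (((k : ZMod n)).val)) = 0 := by
      rw [Finset.mul_sum]
      calc ∑ k ∈ T₀, F j * ξ ^ (((k : ZMod n)).val)
          = ∑ k ∈ T₀, ∑ z : ZMod n, (ω ^ z.val) ^ j * W (z + (k : ZMod n)) :=
            Finset.sum_congr rfl (fun k _ => (hterm _).symm)
        _ = ∑ z : ZMod n, ∑ k ∈ T₀, (ω ^ z.val) ^ j * W (z + (k : ZMod n)) :=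
            Finset.sum_comm
        _ = ∑ _z : ZMod n, (0 : ℂ) :=
            Finset.sum_congr rfl (fun z _ => by rw [← Finset.mul_sum, hrel z, mul_zero])
        _ = 0 := Finset.sum_const_zero
    rcases mul_eq_zero.mp hsum0 with h | hμ
    · exact Or.inl h
    · right
      rw [sumT0 n hn (fun k => ξ ^ (((k : ZMod n)).val)),
        hvlt 3 (by omega), hvlt 4 (by omega), hvlt 5 (by omega), hvlt 8 (by omega),
        hvlt (n-8) (by omega), hvlt (n-5) (by omega), hvlt (n-4) (by omega),
        hvlt (n-3) (by omega)] at hμ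
      have e1 : ξ^(n-8) * ξ^8 = 1 := by
        rw [← pow_add, (by omega : n-8+8 = n), hξn]
      have e2 : ξ^(n-5) * ξ^8 = ξ^3 := by
        rw [← pow_add, (by omega : n-5+8 = n+3), pow_add, hξn, one_mul]
      have e3 : ξ^(n-4) * ξ^8 = ξ^4 := by
        rw [← pow_add, (by omega : n-4+8 = n+4), pow_add, hξn, one_mul]
      have e4 : ξ^(n-3) * ξ^8 = ξ^5 := by
        rw [← pow_add, (by omega : n-3+8 = n+5), pow_add, hξn, one_mul]
      have hp : ξ^16 + ξ^13 + ξ^12 + ξ^11 + ξ^5 + ξ^4 + ξ^3 + 1 = 0 := by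
        linear_combination ξ^8 * hμ - e1 - e2 - e3 - e4
      have hξ1 : ξ = -1 := key_lemma ξ n (by omega) hξn hp
      have hωj : ω ^ j = ξ⁻¹ := by rw [hξ, inv_inv]
      rw [hωj, hξ1]
      norm_num
  -- Fourier inversion
  have hinv2 : ∀ z : ZMod n, ∑ j ∈ Finset.range n, F j * ((ω ^ z.val) ^ j)⁻¹
      = (n : ℂ) * W z := by
    intro z
    have hgeo : ∀ y : ZMod n,
        ∑ j ∈ Finset.range n, (ω ^ y.val) ^ j * ((ω ^ z.val) ^ j)⁻¹
          = if y = z then (n : ℂ) else 0 := by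
      intro y
      have hrw : ∀ j : ℕ, (ω ^ y.val) ^ j * ((ω ^ z.val) ^ j)⁻¹
          = (ω ^ y.val * (ω ^ z.val)⁻¹) ^ j := by
        intro j; rw [mul_pow, inv_pow]
      rw [Finset.sum_congr rfl fun j _ => hrw j]
      by_cases hyz : y = z
      · subst hyz
        rw [if_pos rfl, mul_inv_cancel₀ (pow_ne_zero _ hωne)]
        simp
      · rw [if_neg hyz]
        set ρ := ω ^ y.val * (ω ^ z.val)⁻¹ with hρ
        have hρn : ρ ^ n = 1 := by
          rw [hρ, mul_pow, inv_pow, ← pow_mul, ← pow_mul, mul_comm (y.val) n,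
            mul_comm (z.val) n, pow_mul, pow_mul, hωn, one_pow, one_pow, inv_one, mul_one]
        have hρ1 : ρ ≠ 1 := by
          intro h1
          have h2 : ω ^ y.val = ω ^ z.val := by
            have := congrArg (fun t => t * ω ^ z.val) h1
            simpa [hρ, mul_assoc, inv_mul_cancel₀ (pow_ne_zero (z.val) hωne)] using this
          exact hyz (ZMod.val_injective n (hprim.pow_inj y.val_lt z.val_lt h2))
        rw [geom_sum_eq hρ1, hρn]
        simp
    calc ∑ j ∈ Finset.range n, F j * ((ω ^ z.val) ^ j)⁻¹
        = ∑ j ∈ Finset.range n, ∑ y : ZMod n,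
            W y * ((ω ^ y.val) ^ j * ((ω ^ z.val) ^ j)⁻¹) := by
          refine Finset.sum_congr rfl fun j _ => ?_
          rw [hF, Finset.sum_mul]
          exact Finset.sum_congr rfl fun y _ => by ring
      _ = ∑ y : ZMod n, ∑ j ∈ Finset.range n,
            W y * ((ω ^ y.val) ^ j * ((ω ^ z.val) ^ j)⁻¹) := Finset.sum_comm
      _ = ∑ y : ZMod n, W y * (if y = z then (n : ℂ) else 0) := by
          refine Finset.sum_congr rfl fun y _ => ?_
          rw [← Finset.mul_sum, hgeo y]
      _ = (n : ℂ) * W z := by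
          rw [Finset.sum_eq_single z (fun y _ hy => by rw [if_neg hy, mul_zero])
            (fun h => absurd (Finset.mem_univ z) h), if_pos rfl, mul_comm]
  -- ω^(n/2) = -1
  have hfne : (hf : ℂ) ≠ 0 := Nat.cast_ne_zero.mpr (by omega)
  have hhalfval : ω ^ (n / 2) = -1 := by
    have hn2 : n / 2 = hf := by omega
    have harg : ((n / 2 : ℕ) : ℂ) * (2 * Real.pi * Complex.I / n)
        = Real.pi * Complex.I := by
      rw [hn2]
      have hcast : (n : ℂ) = 2 * hf := by rw [hhalf]; push_cast; ring
      rw [hcast]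
      field_simp
    rw [hωdef, ← Complex.exp_nat_mul, harg, Complex.exp_pi_mul_I]
  have hne2 : (n : ℂ) ≠ 0 := Nat.cast_ne_zero.mpr (by omega)
  -- F j = 0 away from n/2
  have hkey : ∀ z : ZMod n, (n : ℂ) * W z = F (n / 2) * ((-1) ^ z.val) := by
    intro z
    rw [← hinv2 z]
    rw [Finset.sum_eq_single (n / 2)]
    · congr 1
      rw [← pow_mul, mul_comm (z.val) (n/2), pow_mul, hhalfval, ← inv_pow, inv_neg, inv_one]
    · intro b hbmem hb
      rcases stepA b with h | h
      · rw [h, zero_mul]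
      · exfalso
        have hbn : b < n := Finset.mem_range.mp hbmem
        exact hb (hprim.pow_inj hbn (by omega) (h.trans hhalfval.symm))
    · intro h
      exact absurd (Finset.mem_range.mpr (by omega)) h
  have hW0 : ∀ z : ZMod n, W z = W 0 * (-1) ^ z.val := by
    intro z
    have h1 := hkey z
    have h2 := hkey 0
    rw [ZMod.val_zero, pow_zero, mul_one] at h2
    apply mul_left_cancel₀ hne2
    rw [h1, ← h2]
    ring
  refine ⟨w (e.symm 0), ?_⟩
  funext i
  have h3 := hW0 ((i.val : ZMod n))
  have h4 : W ((i.val : ZMod n)) = ((w i : ℚ) : ℂ) := by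
    show ((w (e.symm ((i.val : ZMod n))) : ℚ) : ℂ) = _
    rw [show ((i.val : ZMod n)) = e i from rfl, e.symm_apply_apply]
  have h5 : (((i.val : ZMod n)).val) = i.val := hvlt i.val i.isLt
  rw [h4, h5] at h3
  have h6 : ((w i : ℚ) : ℂ) = ((w (e.symm 0) * (-1) ^ (i.val) : ℚ) : ℂ) := by
    rw [h3, hW]
    push_cast
    ring
  have h7 : w i = w (e.symm 0) * (-1) ^ (i.val) := by exact_mod_cast h6
  simp only [Pi.smul_apply, smul_eq_mul, hv]
  exact h7
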